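/- arXiv:1511.01705 — 2 statements merged into one kernel-verified Lean document; each statement's English description precedes it below -/
import Mathlib

section
/- Let q = 2^k with ζ = e^{2πi/2^k}, and let G_j : 𝔽_{2^m} → 𝔽₂ for 0 ≤ j ≤ k−1 be Boolean functions with G_j(0) = 0 and Σ_{t ∈ 𝔽_{2^m}} ζ^{Σ_{j=0}^{k−1} 2^j G_j(t)} = 0. Then the function f : 𝔽_{2^m} × 𝔽_{2^m} → ℤ_{2^k} given by f(x,y) = Σ_{j=0}^{k−1} 2^j G_j(x/y) (with the convention 1/0 = 0) is a gbent function in 2m variables, and its dual is f*(x,y) = Σ_{j=0}^{k−1} 2^j G_j(y/x). -/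
open scoped BigOperators

/-- `ζ_q = e^{2πi/q}`. -/
noncomputable def zeta (q : ℕ) : ℂ := Complex.exp (2 * Real.pi * Complex.I / q)

noncomputable instance (p n : ℕ) [Fact p.Prime] : Fintype (GaloisField p n) :=
  Fintype.ofFinite _

/-- The absolute trace `Tr_m : 𝔽_{2^m} → 𝔽₂`. -/
noncomputable def tr (m : ℕ) (x : GaloisField 2 m) : ZMod 2 :=
  Algebra.trace (ZMod 2) (GaloisField 2 m) x

/-- The generalized Walsh–Hadamard transform of `f : 𝔽_{2^m} × 𝔽_{2^m} → ℤ_q`,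
using the inner product `⟨(x₁,y₁),(x₂,y₂)⟩ = Tr_m(x₁x₂ + y₁y₂)`. -/
noncomputable def gWHT2 {m q : ℕ} (f : GaloisField 2 m × GaloisField 2 m → ZMod q)
    (u : GaloisField 2 m × GaloisField 2 m) : ℂ :=
  ∑ x : GaloisField 2 m × GaloisField 2 m,
    zeta q ^ (f x).val * (-1 : ℂ) ^ (tr m (u.1 * x.1 + u.2 * x.2)).val

lemma aux_abs_zeta (q : ℕ) : ‖zeta q‖ = 1 := by
  rw [zeta, Complex.norm_exp]
  norm_num [Complex.div_re, Complex.mul_re, Complex.mul_im]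

lemma aux_card (m : ℕ) (hm : 0 < m) : Fintype.card (GaloisField 2 m) = 2 ^ m := by
  rw [Fintype.card_eq_nat_card]; exact GaloisField.card 2 m hm.ne'

lemma aux_neg_one_pow (a b : ZMod 2) :
    (-1:ℂ) ^ (a + b).val = (-1:ℂ) ^ a.val * (-1:ℂ) ^ b.val := by
  rw [← pow_add, ZMod.val_add, ← Nat.mod_add_div (a.val + b.val) 2, pow_add, pow_mul]
  norm_num

lemma aux_tr_add (m : ℕ) (u v : GaloisField 2 m) : tr m (u + v) = tr m u + tr m v := by
  simp [tr]

lemma aux_tr_zero (m : ℕ) : tr m 0 = 0 := by simp [tr]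

open scoped Classical in
lemma aux_charsum (m : ℕ) (hm : 0 < m) (c : GaloisField 2 m) :
    (∑ x : GaloisField 2 m, (-1:ℂ) ^ (tr m (c * x)).val) =
      if c = 0 then (2:ℂ) ^ m else 0 := by
  rcases eq_or_ne c 0 with rfl | hc
  · simp [aux_tr_zero, Finset.sum_const, aux_card m hm]
  · rw [if_neg hc]
    obtain ⟨z, hz⟩ : ∃ z, Algebra.trace (ZMod 2) (GaloisField 2 m) z ≠ 0 := by
      by_contra hcon; push_neg at hcon
      exact Algebra.trace_ne_zero (ZMod 2) (GaloisField 2 m) (LinearMap.ext fun x => hcon x)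
    have hcz : c * (z / c) = z := by field_simp
    have htr1 : tr m (c * (z / c)) = 1 := by
      rw [hcz]
      have : ∀ a : ZMod 2, a ≠ 0 → a = 1 := by decide
      exact this _ hz
    set S := ∑ x : GaloisField 2 m, (-1:ℂ) ^ (tr m (c * x)).val with hS
    have key : S = -S := by
      calc S = ∑ x : GaloisField 2 m, (-1:ℂ) ^ (tr m (c * (x + z / c))).val :=
            (Equiv.sum_comp (Equiv.addRight (z / c))
              (fun x => (-1:ℂ) ^ (tr m (c * x)).val)).symm
        _ = ∑ x : GaloisField 2 m, -((-1:ℂ) ^ (tr m (c * x)).val) := by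
            refine Finset.sum_congr rfl fun x _ => ?_
            rw [mul_add, aux_tr_add, aux_neg_one_pow, htr1]
            norm_num [show ((1:ZMod 2)).val = 1 from rfl]
        _ = -S := by rw [← Finset.sum_neg_distrib]
    have h2 : (2:ℂ) * S = 0 := by linear_combination key
    have := mul_eq_zero.mp h2
    simpa using this

lemma aux_range_pow : ∀ k : ℕ, (∑ i ∈ Finset.range k, 2 ^ i) < 2 ^ k := by
  intro k
  induction k with
  | zero => simp
  | succ n ih => rw [Finset.sum_range_succ, pow_succ]; omega

lemma aux_val (k : ℕ) (w : Fin k → ZMod 2) :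
    (∑ j : Fin k, (2 ^ (j : ℕ) : ZMod (2 ^ k)) * ((w j).val : ZMod (2 ^ k))).val
      = ∑ j : Fin k, 2 ^ (j : ℕ) * (w j).val := by
  haveI : NeZero (2 ^ k) := ⟨pow_ne_zero _ two_ne_zero⟩
  have hlt : (∑ j : Fin k, 2 ^ (j : ℕ) * (w j).val) < 2 ^ k := by
    calc (∑ j : Fin k, 2 ^ (j : ℕ) * (w j).val) ≤ ∑ j : Fin k, 2 ^ (j : ℕ) * 1 :=
          Finset.sum_le_sum fun j _ => Nat.mul_le_mul_left _
            (by have := ZMod.val_lt (w j); omega)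
      _ = ∑ i ∈ Finset.range k, 2 ^ i := by simp [Fin.sum_univ_eq_sum_range]
      _ < 2 ^ k := aux_range_pow k
  have hcast : (∑ j : Fin k, (2 ^ (j : ℕ) : ZMod (2 ^ k)) * ((w j).val : ZMod (2 ^ k)))
      = (((∑ j : Fin k, 2 ^ (j : ℕ) * (w j).val : ℕ)) : ZMod (2 ^ k)) := by
    push_cast; ring
  rw [hcast, ZMod.val_cast_of_lt hlt]

/-- the generalized `PS_ap` construction. If `G_j(0) = 0` and
`Σ_t ζ^{Σ_j 2^j G_j(t)} = 0`, then `f(x,y) = Σ_j 2^j G_j(x/y)` is gbent in `2m`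
variables with dual `f*(x,y) = Σ_j 2^j G_j(y/x)` (convention `1/0 = 0`). -/
theorem stmt3 (m k : ℕ) (hm : 0 < m) (hk : 0 < k)
    (G : Fin k → GaloisField 2 m → ZMod 2)
    (hG0 : ∀ j, G j 0 = 0)
    (hGsum : ∑ t : GaloisField 2 m,
      zeta (2 ^ k) ^ (∑ j : Fin k, 2 ^ (j : ℕ) * (G j t).val) = 0)
    (f fstar : GaloisField 2 m × GaloisField 2 m → ZMod (2 ^ k))
    (hf : ∀ x y, f (x, y) =
      ∑ j : Fin k, (2 ^ (j : ℕ) : ZMod (2 ^ k)) * ((G j (x / y)).val : ZMod (2 ^ k)))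
    (hfstar : ∀ x y, fstar (x, y) =
      ∑ j : Fin k, (2 ^ (j : ℕ) : ZMod (2 ^ k)) * ((G j (y / x)).val : ZMod (2 ^ k))) :
    (∀ u, ‖gWHT2 f u‖ = (2 : ℝ) ^ m) ∧
    (∀ u, gWHT2 f u = (2 : ℂ) ^ m * zeta (2 ^ k) ^ (fstar u).val) := by
  classical
  set g : GaloisField 2 m → ℕ := fun t => ∑ j : Fin k, 2 ^ (j : ℕ) * (G j t).val with hgdef
  have hg0 : g 0 = 0 := by simp [hgdef, hG0]
  have hfval : ∀ x y : GaloisField 2 m, (f (x, y)).val = g (x / y) := by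
    intro x y; rw [hf]; exact aux_val k (fun j => G j (x / y))
  have hfsval : ∀ x y : GaloisField 2 m, (fstar (x, y)).val = g (y / x) := by
    intro x y; rw [hfstar]; exact aux_val k (fun j => G j (y / x))
  have hGsum' : ∑ t : GaloisField 2 m, zeta (2 ^ k) ^ (g t) = 0 := hGsum
  -- erased character sum
  have eraseSum : ∀ c : GaloisField 2 m, ∑ y ∈ Finset.univ.erase 0, (-1:ℂ) ^ (tr m (c * y)).val
      = (if c = 0 then (2:ℂ) ^ m else 0) - 1 := by
    intro c
    have h := aux_charsum m hm c
    rw [← Finset.add_sum_erase _ _ (Finset.mem_univ (0:GaloisField 2 m))] at h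
    rw [mul_zero, aux_tr_zero] at h
    simp only [ZMod.val_zero, pow_zero] at h
    linear_combination h
  have key : ∀ a b : GaloisField 2 m, gWHT2 f (a, b) = (2:ℂ) ^ m * zeta (2 ^ k) ^ (g (b / a)) := by
    intro a b
    have expand : gWHT2 f (a, b)
        = ∑ y : GaloisField 2 m, ∑ x : GaloisField 2 m, zeta (2 ^ k) ^ (g (x / y)) * (-1:ℂ) ^ (tr m (a * x + b * y)).val := by
      rw [gWHT2, Fintype.sum_prod_type, Finset.sum_comm]
      exact Finset.sum_congr rfl fun y _ => Finset.sum_congr rfl fun x _ => by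
        rw [hfval]
    have inner0 : ∑ x : GaloisField 2 m, zeta (2 ^ k) ^ (g (x / (0:GaloisField 2 m))) * (-1:ℂ) ^ (tr m (a * x + b * 0)).val
        = if a = 0 then (2:ℂ) ^ m else 0 := by
      simp only [div_zero, hg0, pow_zero, one_mul, mul_zero, add_zero]
      exact aux_charsum m hm a
    have innery : ∀ y : GaloisField 2 m, y ≠ 0 →
        (∑ x : GaloisField 2 m, zeta (2 ^ k) ^ (g (x / y)) * (-1:ℂ) ^ (tr m (a * x + b * y)).val)
        = ∑ z : GaloisField 2 m, zeta (2 ^ k) ^ (g z) * (-1:ℂ) ^ (tr m ((a * z + b) * y)).val := by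
      intro y hy
      rw [← Equiv.sum_comp (Equiv.mulRight₀ y hy)
        (fun x => zeta (2 ^ k) ^ (g (x / y)) * (-1:ℂ) ^ (tr m (a * x + b * y)).val)]
      refine Finset.sum_congr rfl fun z _ => ?_
      have h1 : (Equiv.mulRight₀ y hy) z = z * y := rfl
      rw [h1, mul_div_cancel_right₀ _ hy]
      have h2 : a * (z * y) + b * y = (a * z + b) * y := by ring
      rw [h2]
    calc gWHT2 f (a, b)
        = ∑ y : GaloisField 2 m, ∑ x : GaloisField 2 m, zeta (2 ^ k) ^ (g (x / y)) * (-1:ℂ) ^ (tr m (a * x + b * y)).val :=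
          expand
      _ = (∑ x : GaloisField 2 m, zeta (2 ^ k) ^ (g (x / (0:GaloisField 2 m))) * (-1:ℂ) ^ (tr m (a * x + b * 0)).val)
          + ∑ y ∈ Finset.univ.erase 0, ∑ x : GaloisField 2 m,
              zeta (2 ^ k) ^ (g (x / y)) * (-1:ℂ) ^ (tr m (a * x + b * y)).val :=
          (Finset.add_sum_erase _ _ (Finset.mem_univ (0:GaloisField 2 m))).symm
      _ = (if a = 0 then (2:ℂ) ^ m else 0)
          + ∑ y ∈ Finset.univ.erase 0, ∑ z : GaloisField 2 m,
              zeta (2 ^ k) ^ (g z) * (-1:ℂ) ^ (tr m ((a * z + b) * y)).val := by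
          rw [inner0]
          congr 1
          exact Finset.sum_congr rfl fun y hy => innery y (Finset.ne_of_mem_erase hy)
      _ = (if a = 0 then (2:ℂ) ^ m else 0)
          + ∑ z : GaloisField 2 m, zeta (2 ^ k) ^ (g z)
              * ((if a * z + b = 0 then (2:ℂ) ^ m else 0) - 1) := by
          rw [Finset.sum_comm]
          congr 1
          refine Finset.sum_congr rfl fun z _ => ?_
          rw [← Finset.mul_sum, eraseSum (a * z + b)]
      _ = (if a = 0 then (2:ℂ) ^ m else 0)
          + ((∑ z : GaloisField 2 m, zeta (2 ^ k) ^ (g z) * (if a * z + b = 0 then (2:ℂ) ^ m else 0))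
            - ∑ z : GaloisField 2 m, zeta (2 ^ k) ^ (g z)) := by
          rw [← Finset.sum_sub_distrib]
          congr 1
          exact Finset.sum_congr rfl fun z _ => by ring
      _ = (if a = 0 then (2:ℂ) ^ m else 0)
          + (∑ z : GaloisField 2 m, zeta (2 ^ k) ^ (g z) * (if a * z + b = 0 then (2:ℂ) ^ m else 0)) := by
          rw [hGsum']; ring
      _ = (2:ℂ) ^ m * zeta (2 ^ k) ^ (g (b / a)) := by
          rcases eq_or_ne a 0 with rfl | ha
          · simp only [if_pos rfl, zero_mul, zero_add]
            rcases eq_or_ne b 0 with rfl | hb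
            · simp only [eq_self_iff_true, if_true]
              rw [← Finset.sum_mul, hGsum', zero_mul, add_zero, zero_div, hg0, pow_zero, mul_one]
            · simp only [if_neg hb, mul_zero, Finset.sum_const_zero, add_zero,
                div_zero, hg0, pow_zero, mul_one, eq_self_iff_true, if_true]
          · rw [if_neg ha, zero_add]
            have hcond : ∀ z : GaloisField 2 m, (a * z + b = 0) ↔ z = b / a := by
              intro z
              rw [add_eq_zero_iff_eq_neg, CharTwo.neg_eq, eq_div_iff ha, mul_comm]
            calc (∑ z : GaloisField 2 m, zeta (2 ^ k) ^ (g z) * (if a * z + b = 0 then (2:ℂ) ^ m else 0))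
                = ∑ z : GaloisField 2 m, (if z = b / a then zeta (2 ^ k) ^ (g z) * (2:ℂ) ^ m else 0) := by
                  refine Finset.sum_congr rfl fun z _ => ?_
                  rw [hcond z]
                  split_ifs <;> ring
              _ = zeta (2 ^ k) ^ (g (b / a)) * (2:ℂ) ^ m := by
                  rw [Finset.sum_ite_eq' Finset.univ (b / a)
                    (fun z => zeta (2 ^ k) ^ (g z) * (2:ℂ) ^ m), if_pos (Finset.mem_univ _)]
              _ = (2:ℂ) ^ m * zeta (2 ^ k) ^ (g (b / a)) := by ring
  constructor
  · rintro ⟨a, b⟩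
    rw [key a b, norm_mul, norm_pow, norm_pow, aux_abs_zeta, one_pow, mul_one, Complex.norm_two]
  · rintro ⟨a, b⟩
    rw [key a b, hfsval a b]
end

section
/- Let q = 2^t, n = 2m, and let U₁, …, U_A be elements of a partial spread of 𝔽₂ⁿ. Let k₁, …, k_A ∈ {1, …, q−1} and ρ ∈ {0, …, q−1} satisfy Σ_{i=1}^{A} ζ^{k_i} = A − (2^m + 1) + ζ^{ρ}, where ζ = e^{2πi/2^t}. Define f : 𝔽₂ⁿ → ℤ_q by f(0) = ρ, f(x) = k_i if x ∈ U_i and x ≠ 0, and f(x) = 0 if x ∈ 𝔽₂ⁿ ∖ ⋃_{k=1}^{A} U_k. Then f is a gbent function, and its dual f* is given by f*(0) = ρ, f*(x) = k_i if x ∈ U_i^⊥ and x ≠ 0, and f*(x) = 0 if x ∈ 𝔽₂ⁿ ∖ ⋃_{k=1}^{A} U_k^⊥. -/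
open scoped BigOperators

/-- The standard inner product `⟨u,x⟩ = Σᵢ uᵢxᵢ` on `𝔽₂ⁿ`. -/
def ip {n : ℕ} (u x : Fin n → ZMod 2) : ZMod 2 := ∑ i, u i * x i

/-- The generalized Walsh–Hadamard transform
`H_f(u) = Σ_x ζ_q^{f(x)} (−1)^{⟨u,x⟩}` of `f : 𝔽₂ⁿ → ℤ_q`. -/
noncomputable def gWHT {n q : ℕ} (f : (Fin n → ZMod 2) → ZMod q) (u : Fin n → ZMod 2) : ℂ :=
  ∑ x : Fin n → ZMod 2, zeta q ^ (f x).val * (-1 : ℂ) ^ (ip u x).val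

/-- `f` is gbent if `|H_f(u)| = 2^{n/2}` for all `u`. -/
def IsGbent {n q : ℕ} (f : (Fin n → ZMod 2) → ZMod q) : Prop :=
  ∀ u, ‖gWHT f u‖ = (2 : ℝ) ^ ((n : ℝ) / 2)

/-- `g` is the dual of `f`: `H_f(u) = 2^{n/2} ζ_q^{g(u)}` for all `u`. -/
def IsDualOf {n q : ℕ} (g f : (Fin n → ZMod 2) → ZMod q) : Prop :=
  ∀ u, gWHT f u = ((2 : ℝ) ^ ((n : ℝ) / 2) : ℝ) * zeta q ^ (g u).val

/-- `f` is a regular gbent function: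
`H_f(u) = 2^{n/2} ζ_q^{j_u}` for some `j_u ∈ ℤ_q`, for every `u`. -/
def IsRegularGbent {n q : ℕ} (f : (Fin n → ZMod 2) → ZMod q) : Prop :=
  IsGbent f ∧ ∀ u, ∃ j : ZMod q, gWHT f u = ((2 : ℝ) ^ ((n : ℝ) / 2) : ℝ) * zeta q ^ j.val

/-- The orthogonal complement of a subspace `U ⊆ 𝔽₂ⁿ` w.r.t. `⟨·,·⟩`. -/
def orthComp {n : ℕ} (U : Submodule (ZMod 2) (Fin n → ZMod 2)) : Set (Fin n → ZMod 2) :=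
  {u | ∀ x ∈ U, ip u x = 0}

/-- `F : 𝔽₂ⁿ → ℤ_q^m` is vectorial gbent if every component function
`c·F`, `c ≠ 0`, is gbent. -/
def IsVectorialGbent {n q m : ℕ} (F : (Fin n → ZMod 2) → Fin m → ZMod q) : Prop :=
  ∀ c : Fin m → ZMod q, c ≠ 0 → IsGbent (fun x => ∑ j, c j * F x j)

open scoped Classical

lemma chi_add (a b : ZMod 2) :
    ((-1:ℂ)) ^ (a + b).val = (-1:ℂ) ^ a.val * (-1:ℂ) ^ b.val := by
  have h : ∀ c : ZMod 2, c = 0 ∨ c = 1 := by decide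
  rcases h a with ha | ha <;> rcases h b with hb | hb <;> subst ha <;> subst hb <;>
    norm_num [ZMod.val_zero, ZMod.val_one, show ((2:ZMod 2)).val = 0 from rfl]

lemma ip_add {n : ℕ} (u x y : Fin n → ZMod 2) : ip u (x + y) = ip u x + ip u y := by
  simp [ip, mul_add, Finset.sum_add_distrib]

lemma ip_zero_right {n : ℕ} (u : Fin n → ZMod 2) : ip u 0 = 0 := by simp [ip]

lemma ip_zero_left {n : ℕ} (x : Fin n → ZMod 2) : ip 0 x = 0 := by simp [ip]

lemma ip_single {n : ℕ} (u : Fin n → ZMod 2) (i : Fin n) : ip u (Pi.single i 1) = u i := by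
  simp [ip, Pi.single_apply, Finset.sum_ite_eq']

lemma eq_zero_of_ip {n : ℕ} (u : Fin n → ZMod 2) (h : ∀ x, ip u x = 0) : u = 0 := by
  funext i
  have := h (Pi.single i 1)
  rwa [ip_single] at this

lemma abs_zeta_pow (q : ℕ) (j : ℕ) : ‖zeta q ^ j‖ = 1 := by
  rw [norm_pow]
  have : (2 * Real.pi * Complex.I / q) = ((2 * Real.pi / q : ℝ) : ℂ) * Complex.I := by
    push_cast; ring
  rw [zeta, this, Complex.norm_exp_ofReal_mul_I, one_pow]

lemma add_self_zero {n : ℕ} (x : Fin n → ZMod 2) : x + x = 0 := by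
  funext i; simp [CharTwo.add_self_eq_zero]

lemma sum_chi_shift {n : ℕ} (u x0 : Fin n → ZMod 2) (hx0 : ip u x0 = 1)
    (S : Finset (Fin n → ZMod 2)) (hS : ∀ x, x + x0 ∈ S ↔ x ∈ S) :
    ∑ x ∈ S, (-1:ℂ) ^ (ip u x).val = 0 := by
  have key : ∑ x ∈ S, (-1:ℂ) ^ (ip u (x + x0)).val
      = ∑ x ∈ S, (-1:ℂ) ^ (ip u x).val := by
    refine Finset.sum_equiv (Equiv.addRight x0) (fun x => (hS x).symm) (fun x _ => rfl)
  have h2 : ∀ x : Fin n → ZMod 2,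
      (-1:ℂ) ^ (ip u (x + x0)).val = -((-1:ℂ) ^ (ip u x).val) := by
    intro x
    rw [ip_add, hx0, chi_add]
    simp [ZMod.val_one]
  rw [Finset.sum_congr rfl (fun x _ => h2 x), Finset.sum_neg_distrib] at key
  have h3 : (2:ℂ) * ∑ x ∈ S, (-1:ℂ) ^ (ip u x).val = 0 := by linear_combination -key
  simpa using h3

lemma sum_chi_univ {n : ℕ} (u : Fin n → ZMod 2) :
    ∑ x : Fin n → ZMod 2, (-1:ℂ) ^ (ip u x).val
      = if u = 0 then ((2:ℂ) ^ n) else 0 := by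
  split_ifs with hu
  · subst hu
    simp only [ip_zero_left, ZMod.val_zero, pow_zero, Finset.sum_const, nsmul_eq_mul, mul_one]
    simp [Fintype.card_pi, ZMod.card]
  · obtain ⟨i, hi⟩ : ∃ i, u i ≠ 0 := by
      by_contra h
      push_neg at h
      exact hu (funext fun i => h i)
    have hi1 : u i = 1 := by
      have h2 : ∀ c : ZMod 2, c = 0 ∨ c = 1 := by decide
      rcases h2 (u i) with h | h
      · exact absurd h hi
      · exact h
    exact sum_chi_shift u (Pi.single i 1) (by rw [ip_single, hi1]) _ (fun x => by simp)

lemma sum_chi_submodule {n : ℕ} (U : Submodule (ZMod 2) (Fin n → ZMod 2))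
    (u : Fin n → ZMod 2) :
    ∑ x : Fin n → ZMod 2, (if x ∈ U then (-1:ℂ) ^ (ip u x).val else 0)
      = if (∀ x ∈ U, ip u x = 0) then (Fintype.card U : ℂ) else 0 := by
  rw [← Finset.sum_filter]
  split_ifs with h
  · rw [Finset.sum_congr rfl (fun x hx => by
      rw [(h x (Finset.mem_filter.mp hx).2 : ip u x = 0), ZMod.val_zero, pow_zero]),
      Finset.sum_const, nsmul_eq_mul, mul_one]
    norm_cast
    rw [Fintype.card_subtype]
  · push_neg at h
    obtain ⟨x0, hx0U, hx0⟩ := h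
    have hx01 : ip u x0 = 1 := by
      have h2 : ∀ c : ZMod 2, c = 0 ∨ c = 1 := by decide
      rcases h2 (ip u x0) with h | h
      · exact absurd h hx0
      · exact h
    refine sum_chi_shift u x0 hx01 _ (fun x => ?_)
    simp only [Finset.mem_filter, Finset.mem_univ, true_and]
    constructor
    · intro hx
      have h2 : x + x0 + x0 ∈ U := U.add_mem hx hx0U
      rwa [add_assoc, add_self_zero, add_zero] at h2
    · intro hx; exact U.add_mem hx hx0U

lemma uniq_orth {m A : ℕ} (U : Fin A → Submodule (ZMod 2) (Fin (2 * m) → ZMod 2))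
    (hdim : ∀ i, Module.finrank (ZMod 2) (U i) = m)
    (hint : ∀ i j, i ≠ j → U i ⊓ U j = ⊥)
    {i j : Fin A} (hij : i ≠ j) (u : Fin (2 * m) → ZMod 2)
    (hi : ∀ x ∈ U i, ip u x = 0) (hj : ∀ x ∈ U j, ip u x = 0) : u = 0 := by
  have htop : U i ⊔ U j = ⊤ := by
    apply Submodule.eq_top_of_finrank_eq
    have h1 := Submodule.finrank_sup_add_finrank_inf_eq (U i) (U j)
    rw [hint i j hij, finrank_bot, hdim, hdim] at h1
    rw [Module.finrank_fin_fun]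
    omega
  apply eq_zero_of_ip
  intro x
  have hx : x ∈ U i ⊔ U j := htop ▸ Submodule.mem_top
  obtain ⟨y, hy, z, hz, rfl⟩ := Submodule.mem_sup.mp hx
  rw [ip_add, hi y hy, hj z hz, add_zero]

lemma card_sub {m A : ℕ} (U : Fin A → Submodule (ZMod 2) (Fin (2 * m) → ZMod 2))
    (hdim : ∀ i, Module.finrank (ZMod 2) (U i) = m) (i : Fin A) :
    (Fintype.card (U i) : ℂ) = (2:ℂ) ^ m := by
  rw [Module.card_eq_pow_finrank (K := ZMod 2), hdim i, ZMod.card]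
  push_cast
  ring

/-- the partial spread construction. If
`Σ_i ζ^{k_i} = A − (2^m + 1) + ζ^ρ` then `f` (equal to `k_i` on `U_i ∖ {0}`, to
`ρ` at `0`, and to `0` outside `⋃ U_i`) is gbent, with dual given by the
orthogonal partial spread. -/
theorem stmt6 (t m A : ℕ) (ht : 1 ≤ t) (hm : 0 < m)
    (U : Fin A → Submodule (ZMod 2) (Fin (2 * m) → ZMod 2))
    (hdim : ∀ i, Module.finrank (ZMod 2) (U i) = m)
    (hint : ∀ i j, i ≠ j → U i ⊓ U j = ⊥)
    (k : Fin A → ZMod (2 ^ t)) (hk : ∀ i, k i ≠ 0) (ρ : ZMod (2 ^ t))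
    (hcon : ∑ i, zeta (2 ^ t) ^ (k i).val
      = (A : ℂ) - (2 ^ m + 1) + zeta (2 ^ t) ^ ρ.val)
    (f : (Fin (2 * m) → ZMod 2) → ZMod (2 ^ t))
    (hf0 : f 0 = ρ)
    (hf1 : ∀ i, ∀ x ∈ U i, x ≠ 0 → f x = k i)
    (hf2 : ∀ x, x ∉ ⋃ i, (U i : Set (Fin (2 * m) → ZMod 2)) → f x = 0) :
    IsGbent f ∧
    ∀ g : (Fin (2 * m) → ZMod 2) → ZMod (2 ^ t), g 0 = ρ →
      (∀ i, ∀ x ∈ orthComp (U i), x ≠ 0 → g x = k i) →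
      (∀ x, x ∉ ⋃ i, orthComp (U i) → g x = 0) →
      IsDualOf g f := by
  haveI : NeZero (2 ^ t) := ⟨(pow_pos (by norm_num : (0:ℕ) < 2) t).ne'⟩
  -- the case `A = 0` is impossible
  have hAne : A ≠ 0 := by
    intro hA
    subst hA
    rw [Finset.univ_eq_empty, Finset.sum_empty] at hcon
    have h1 : ‖zeta (2 ^ t) ^ ρ.val‖ = 1 := abs_zeta_pow _ _
    have h2 : zeta (2 ^ t) ^ ρ.val = (2:ℂ) ^ m + 1 := by
      push_cast at hcon; linear_combination -hcon
    rw [h2] at h1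
    have h3 : ((2:ℂ) ^ m + 1) = (((2:ℝ) ^ m + 1 : ℝ) : ℂ) := by push_cast; ring
    rw [h3, Complex.norm_real, Real.norm_eq_abs, abs_of_pos (by positivity)] at h1
    nlinarith [pow_pos (by norm_num : (0:ℝ) < 2) m]
  -- the coefficient `2^{n/2}` is `2^m`
  have hcoef : ((((2 : ℝ) ^ (((2 * m : ℕ) : ℝ) / 2)) : ℝ) : ℂ) = (2:ℂ) ^ m := by
    have h1 : ((2 * m : ℕ) : ℝ) / 2 = ((m : ℕ) : ℝ) := by push_cast; ring
    rw [h1, Real.rpow_natCast]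
    push_cast
    ring
  -- main computation of the Walsh--Hadamard transform
  have hW : ∀ u, gWHT f u
      = (if u = 0 then ((2:ℂ) ^ (2 * m)) else 0)
        + (∑ i, (zeta (2 ^ t) ^ (k i).val - 1) *
            (if (∀ x ∈ U i, ip u x = 0) then ((2:ℂ) ^ m) else 0))
        + (2:ℂ) ^ m := by
    intro u
    have hpt : ∀ x, zeta (2 ^ t) ^ (f x).val
        = 1 + (∑ i, if x ∈ U i then (zeta (2 ^ t) ^ (k i).val - 1) else 0)
            + (if x = 0 then ((2:ℂ) ^ m) else 0) := by
      intro x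
      by_cases hx0 : x = 0
      · subst hx0
        rw [hf0, if_pos rfl,
          Finset.sum_congr rfl (fun i _ => if_pos ((U i).zero_mem)),
          Finset.sum_sub_distrib, Finset.sum_const, Finset.card_univ, Fintype.card_fin,
          hcon]
        simp only [nsmul_eq_mul, mul_one]
        ring
      · by_cases hxU : ∃ i, x ∈ U i
        · obtain ⟨i0, hi0⟩ := hxU
          rw [hf1 i0 x hi0 hx0, if_neg hx0,
            Finset.sum_eq_single i0
              (fun j _ hj => if_neg (fun hxj => by
                have hmem : x ∈ U i0 ⊓ U j := ⟨hi0, hxj⟩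
                rw [hint i0 j (Ne.symm hj), Submodule.mem_bot] at hmem
                exact hx0 hmem))
              (fun h => absurd (Finset.mem_univ i0) h),
            if_pos hi0]
          ring
        · push_neg at hxU
          rw [hf2 x (by
            intro h
            rw [Set.mem_iUnion] at h
            obtain ⟨i, hi⟩ := h
            exact hxU i hi)]
          rw [ZMod.val_zero, pow_zero, if_neg hx0,
            Finset.sum_congr rfl (fun i _ => if_neg (fun h => hxU i h)),
            Finset.sum_const]
          simp
    calc gWHT f u
        = ∑ x : Fin (2 * m) → ZMod 2,
            (1 + (∑ i, if x ∈ U i then (zeta (2 ^ t) ^ (k i).val - 1) else 0)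
              + (if x = 0 then ((2:ℂ) ^ m) else 0)) * (-1:ℂ) ^ (ip u x).val :=
          Finset.sum_congr rfl (fun x _ => by rw [hpt x])
      _ = (∑ x : Fin (2 * m) → ZMod 2, (-1:ℂ) ^ (ip u x).val)
          + (∑ i, ∑ x : Fin (2 * m) → ZMod 2,
              (if x ∈ U i then (zeta (2 ^ t) ^ (k i).val - 1) else 0) * (-1:ℂ) ^ (ip u x).val)
          + (∑ x : Fin (2 * m) → ZMod 2,
              (if x = 0 then ((2:ℂ) ^ m) else 0) * (-1:ℂ) ^ (ip u x).val) := by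
          simp only [add_mul, one_mul, Finset.sum_add_distrib, Finset.sum_mul]
          rw [Finset.sum_comm]
      _ = (if u = 0 then ((2:ℂ) ^ (2 * m)) else 0)
          + (∑ i, (zeta (2 ^ t) ^ (k i).val - 1) *
              (if (∀ x ∈ U i, ip u x = 0) then ((2:ℂ) ^ m) else 0))
          + (2:ℂ) ^ m := by
          congr 1
          · congr 1
            · rw [sum_chi_univ]
            · refine Finset.sum_congr rfl (fun i _ => ?_)
              rw [show ∀ c : ℂ, (∑ x : Fin (2 * m) → ZMod 2,
                    (if x ∈ U i then c else 0) * (-1:ℂ) ^ (ip u x).val)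
                  = c * ∑ x : Fin (2 * m) → ZMod 2,
                    (if x ∈ U i then (-1:ℂ) ^ (ip u x).val else 0) from fun c => by
                rw [Finset.mul_sum]
                refine Finset.sum_congr rfl (fun x _ => ?_)
                split_ifs <;> ring]
              rw [sum_chi_submodule]
              split_ifs with h
              · rw [card_sub U hdim i]
              · rfl
          · rw [Finset.sum_congr rfl (fun x _ => by
              rw [show ((if x = 0 then ((2:ℂ) ^ m) else 0) * (-1:ℂ) ^ (ip u x).val)
                  = (if x = 0 then ((2:ℂ) ^ m) * (-1:ℂ) ^ (ip u x).val else 0) from by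
                split_ifs <;> ring]),
              Finset.sum_ite_eq' Finset.univ (0 : Fin (2 * m) → ZMod 2),
              if_pos (Finset.mem_univ _), ip_zero_right]
            simp
  -- the dual statement
  have hkey : ∀ g : (Fin (2 * m) → ZMod 2) → ZMod (2 ^ t), g 0 = ρ →
      (∀ i, ∀ x ∈ orthComp (U i), x ≠ 0 → g x = k i) →
      (∀ x, x ∉ ⋃ i, orthComp (U i) → g x = 0) →
      IsDualOf g f := by
    intro g hg0 hg1 hg2 u
    rw [hW u, hcoef]
    by_cases hu : u = 0
    · subst hu
      rw [hg0, if_pos rfl,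
        Finset.sum_congr rfl (fun i _ => by
          rw [if_pos (fun x _ => ip_zero_left x)]),
        ← Finset.sum_mul, Finset.sum_sub_distrib, Finset.sum_const, Finset.card_univ,
        Fintype.card_fin, hcon]
      simp only [nsmul_eq_mul, mul_one]
      rw [two_mul, pow_add]
      ring
    · by_cases hex : ∃ i, ∀ x ∈ U i, ip u x = 0
      · obtain ⟨i0, hi0⟩ := hex
        rw [hg1 i0 u hi0 hu, if_neg hu,
          Finset.sum_eq_single i0
            (fun j _ hj => by
              rw [if_neg (fun h => hu (uniq_orth U hdim hint hj u h hi0)), mul_zero])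
            (fun h => absurd (Finset.mem_univ i0) h),
          if_pos hi0]
        ring
      · have hgu : g u = 0 := hg2 u (by
          intro h
          rw [Set.mem_iUnion] at h
          obtain ⟨i, hi⟩ := h
          exact hex ⟨i, hi⟩)
        rw [hgu, ZMod.val_zero, pow_zero, mul_one, if_neg hu,
          Finset.sum_congr rfl (fun i _ => by
            rw [if_neg (fun h => hex ⟨i, h⟩), mul_zero]),
          Finset.sum_const]
        simp
  refine ⟨?_, hkey⟩
  -- construct an explicit dual to conclude gbentness
  set g : (Fin (2 * m) → ZMod 2) → ZMod (2 ^ t) := fun u =>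
    if u = 0 then ρ else if h : ∃ i, ∀ x ∈ U i, ip u x = 0 then k h.choose else 0 with hgdef
  have hg0 : g 0 = ρ := if_pos rfl
  have hg1 : ∀ i, ∀ x ∈ orthComp (U i), x ≠ 0 → g x = k i := by
    intro i x hx hx0
    have hx' : ∀ y ∈ U i, ip x y = 0 := hx
    have hex : ∃ j, ∀ y ∈ U j, ip x y = 0 := ⟨i, hx'⟩
    rw [hgdef]
    simp only [if_neg hx0, dif_pos hex]
    by_cases hc : hex.choose = i
    · rw [hc]
    · exact absurd (uniq_orth U hdim hint hc x hex.choose_spec hx') hx0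
  have hg2 : ∀ x, x ∉ ⋃ i, orthComp (U i) → g x = 0 := by
    intro x hx
    have hx0 : x ≠ 0 := by
      rintro rfl
      exact hx (Set.mem_iUnion.mpr
        ⟨⟨0, Nat.pos_of_ne_zero hAne⟩, fun y _ => ip_zero_left y⟩)
    have hnex : ¬∃ i, ∀ y ∈ U i, ip x y = 0 :=
      fun ⟨i, hi⟩ => hx (Set.mem_iUnion.mpr ⟨i, hi⟩)
    rw [hgdef]
    simp only [if_neg hx0, dif_neg hnex]
  have hdual := hkey g hg0 hg1 hg2
  intro u
  rw [hdual u, norm_mul, abs_zeta_pow, mul_one, Complex.norm_real, Real.norm_eq_abs,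
    abs_of_pos (Real.rpow_pos_of_pos (by norm_num) _)]
end
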